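/- Let t0, t1 end in distinct unique minimal symbols $0 < $1 and let Z denote the merge vector defined by: the i-th 0 precedes the j-th 1 in Z iff t0[sa0[i], n0] ⪯ t1[sa1[j], n1] (full suffix comparison). Then the string obtained by interleaving bwt(t0) and bwt(t1) according to Z (taking the next symbol of bwt(t0) for each 0 and of bwt(t1) for each 1) equals the multi-string BWT of t0 and t1: its k-th symbol is the symbol of t0 or t1 preceding (cyclically within its own string) the k-th lexicographically smallest suffix among all suffixes of t0 and t1. -/

import Mathlib

/-- `t0` and `t1` end with distinct unique end-of-string symbols `$0 < $1`,
each strictly smaller than all other symbols occurring in either string. -/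
def DistinctEndMarkers {α : Type*} [LinearOrder α] (t0 t1 : List α) : Prop :=
  ∃ (h0 : t0 ≠ []) (h1 : t1 ≠ []),
    t0.getLast h0 < t1.getLast h1 ∧
    (∀ c ∈ t0 ++ t1, c ≠ t0.getLast h0 → c ≠ t1.getLast h1 → t1.getLast h1 < c) ∧
    (∀ i (hi : i < t0.length - 1), t0[i]'(by omega) ≠ t0.getLast h0) ∧
    (∀ i (hi : i < t1.length - 1), t1[i]'(by omega) ≠ t1.getLast h1) ∧
    t0.getLast h0 ∉ t1 ∧ t1.getLast h1 ∉ t0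

/-- The position (0-based index) of the `i`-th occurrence of bit `b` in `Z`
(`Z.length` if there is no such occurrence). -/
def nthPos (Z : List Bool) (b : Bool) (i : ℕ) : ℕ :=
  ((List.range Z.length).filter (fun p => Z.getD p (!b) == b)).getD i Z.length

/-- The BWT symbol of `t` at suffix-array position `i`: the symbol of `t` cyclically
preceding the suffix `t[sa(i)..]` (0-based), i.e. `t[sa(i)-1]`, or the last symbol of
`t` when `sa(i) = 0`. -/
def prevSym {α : Type*} [Inhabited α] (t : List α) (sa : ℕ → ℕ) (i : ℕ) : α :=
  t.getD ((sa i + t.length - 1) % t.length) default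

/-- Interleave the sequences `f` and `g` according to the binary vector `Z`: position
`k` takes the next unused symbol of `g` if `Z[k]` is `1` and of `f` if `Z[k]` is `0`. -/
def mergeBy {α : Type*} (Z : List Bool) (f g : ℕ → α) : ℕ → α := fun k =>
  if Z.getD k false then g ((Z.take k).count true) else f ((Z.take k).count false)


/-! Auxiliary lemmas -/

section NthPosAux

private lemma count_false_add_count_true (Z : List Bool) :
    Z.count false + Z.count true = Z.length := by
  induction Z with
  | nil => simp
  | cons a Z ih => cases a <;> simp [List.count_cons] <;> omega

private def posList (Z : List Bool) (b : Bool) : List ℕ :=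
  (List.range Z.length).filter (fun p => Z.getD p (!b) == b)

private lemma count_take_le (Z : List Bool) (b : Bool) (k : ℕ) :
    (Z.take k).count b ≤ Z.count b := by
  conv_rhs => rw [← List.take_append_drop k Z]
  rw [List.count_append]; omega

private lemma posList_cons (a : Bool) (Z : List Bool) (b : Bool) :
    posList (a :: Z) b =
      (if a = b then [0] else []) ++ (posList Z b).map (· + 1) := by
  unfold posList
  rw [List.length_cons, List.range_succ_eq_map, List.filter_cons, List.filter_map]
  have h1 : ((fun p => (a :: Z).getD p (!b) == b) ∘ Nat.succ)
      = fun p => Z.getD p (!b) == b := by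
    funext p; simp [List.getD_cons_succ]
  rw [h1]
  by_cases hab : a = b <;> simp [hab, Nat.succ_eq_add_one]

private lemma mem_posList {Z : List Bool} {b : Bool} {p : ℕ} :
    p ∈ posList Z b ↔ p < Z.length ∧ Z.getD p false = b := by
  unfold posList
  simp only [List.mem_filter, List.mem_range, beq_iff_eq]
  constructor
  · rintro ⟨h1, h2⟩
    refine ⟨h1, ?_⟩
    rw [List.getD_eq_getElem _ _ h1]
    rw [List.getD_eq_getElem _ _ h1] at h2
    exact h2
  · rintro ⟨h1, h2⟩
    refine ⟨h1, ?_⟩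
    rw [List.getD_eq_getElem _ _ h1]
    rw [List.getD_eq_getElem _ _ h1] at h2
    exact h2

private lemma posList_pairwise (Z : List Bool) (b : Bool) :
    (posList Z b).Pairwise (· < ·) :=
  List.Pairwise.filter _ List.pairwise_lt_range

private lemma posList_length (Z : List Bool) (b : Bool) :
    (posList Z b).length = Z.count b := by
  induction Z with
  | nil => simp [posList]
  | cons a Z ih =>
    rw [posList_cons, List.length_append, List.length_map, ih, List.count_cons]
    by_cases hab : a = b <;> simp [hab] <;> omega

private lemma posList_countP (Z : List Bool) (b : Bool) :
    ∀ k : ℕ, (posList Z b).countP (fun m => decide (m < k)) = (Z.take k).count b := by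
  induction Z with
  | nil => intro k; simp [posList]
  | cons a Z ih =>
    intro k
    cases k with
    | zero =>
      rw [List.take_zero]
      simp [List.countP_eq_zero]
    | succ k =>
      rw [posList_cons, List.countP_append, List.countP_map, List.take_succ_cons,
        List.count_cons]
      have h1 : ((fun m => decide (m < k + 1)) ∘ (· + 1)) = fun m => decide (m < k) := by
        funext m; simp
      rw [h1, ih]
      by_cases hab : a = b <;> simp [hab] <;> omega

private lemma sorted_getD_lt_iff (d k : ℕ) :
    ∀ (L : List ℕ), L.Pairwise (· < ·) → ∀ q < L.length,
      (L.getD q d < k ↔ q < L.countP (fun m => decide (m < k))) := by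
  intro L
  induction L with
  | nil => intro _ q hq; simp at hq
  | cons a L ih =>
    intro hL q hq
    have ha : ∀ x ∈ L, a < x := (List.pairwise_cons.mp hL).1
    have hT : L.Pairwise (· < ·) := (List.pairwise_cons.mp hL).2
    by_cases hak : a < k
    · rw [List.countP_cons_of_pos (p := fun m => decide (m < k)) (a := a) (by simpa using hak)]
      cases q with
      | zero =>
        rw [List.getD_cons_zero]
        constructor
        · intro _; omega
        · intro _; exact hak
      | succ q =>
        rw [List.getD_cons_succ]
        rw [ih hT q (by simpa using hq)]
        omega
    · constructor
      · intro hlt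
        exfalso
        have hmem : (a :: L).getD q d ∈ a :: L := by
          rw [List.getD_eq_getElem _ _ hq]; exact List.getElem_mem _
        rcases List.mem_cons.mp hmem with h | h
        · rw [h] at hlt; exact hak hlt
        · have := ha _ h; omega
      · intro hc
        exfalso
        have hz : (a :: L).countP (fun m => decide (m < k)) = 0 := by
          rw [List.countP_eq_zero]
          intro x hx
          simp only [decide_eq_true_eq]
          rcases List.mem_cons.mp hx with h | h
          · omega
          · have := ha _ h; omega
        omega

private lemma sorted_getD_countP (d : ℕ) :
    ∀ (L : List ℕ), L.Pairwise (· < ·) → ∀ k ∈ L,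
      L.getD (L.countP (fun m => decide (m < k))) d = k := by
  intro L
  induction L with
  | nil => intro _ k hk; simp at hk
  | cons a L ih =>
    intro hL k hk
    have ha : ∀ x ∈ L, a < x := (List.pairwise_cons.mp hL).1
    have hT : L.Pairwise (· < ·) := (List.pairwise_cons.mp hL).2
    rcases List.mem_cons.mp hk with h | h
    · subst h
      have hz : (k :: L).countP (fun m => decide (m < k)) = 0 := by
        rw [List.countP_eq_zero]
        intro x hx
        simp only [decide_eq_true_eq]
        rcases List.mem_cons.mp hx with h' | h'
        · omega
        · have := ha _ h'; omega
      rw [hz, List.getD_cons_zero]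
    · have hak : a < k := ha _ h
      rw [List.countP_cons_of_pos (p := fun m => decide (m < k)) (a := a) (by simpa using hak), List.getD_cons_succ]
      exact ih hT k h

end NthPosAux

/-! Auxiliary lemmas about `nthPos` -/

private lemma nthPos_eq (Z : List Bool) (b : Bool) (i : ℕ) :
    nthPos Z b i = (posList Z b).getD i Z.length := rfl

private lemma nthPos_lt_iff {Z : List Bool} {b : Bool} {q : ℕ}
    (hq : q < Z.count b) (k : ℕ) :
    nthPos Z b q < k ↔ q < (Z.take k).count b := by
  rw [nthPos_eq,
    sorted_getD_lt_iff _ k _ (posList_pairwise Z b) q (by rw [posList_length]; exact hq),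
    posList_countP]

private lemma nthPos_take_count {Z : List Bool} {b : Bool} {k : ℕ}
    (hk : k < Z.length) (hb : Z.getD k false = b) :
    nthPos Z b ((Z.take k).count b) = k := by
  rw [nthPos_eq, ← posList_countP]
  exact sorted_getD_countP _ _ (posList_pairwise Z b) k (mem_posList.mpr ⟨hk, hb⟩)

private lemma nthPos_mem {Z : List Bool} {b : Bool} {q : ℕ} (hq : q < Z.count b) :
    nthPos Z b q < Z.length ∧ Z.getD (nthPos Z b q) false = b := by
  have hlen : q < (posList Z b).length := by rw [posList_length]; exact hq
  have hmem : nthPos Z b q ∈ posList Z b := by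
    rw [nthPos_eq, List.getD_eq_getElem _ _ hlen]
    exact List.getElem_mem _
  exact mem_posList.mp hmem

private lemma take_count_lt {Z : List Bool} {b : Bool} {k : ℕ}
    (hk : k < Z.length) (hb : Z.getD k false = b) :
    (Z.take k).count b < Z.count b := by
  have hkb : Z[k] = b := by rw [← List.getD_eq_getElem Z false hk]; exact hb
  have h2 : (Z.take (k + 1)).count b = (Z.take k).count b + 1 := by
    rw [List.take_succ, List.getElem?_eq_getElem hk, List.count_append]
    simp [hkb]
  have h3 : (Z.take (k + 1)).count b ≤ Z.count b := count_take_le Z b (k + 1)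
  omega

private lemma take_counts {Z : List Bool} {k : ℕ} (hk : k ≤ Z.length) :
    (Z.take k).count false + (Z.take k).count true = k := by
  rw [count_false_add_count_true, List.length_take, min_eq_left hk]

/-! Auxiliary lemmas about suffixes -/

section SuffixAux

variable {α : Type*} [LinearOrder α]

private lemma suffix_lt_iff_lt {t : List α} {sa : ℕ → ℕ}
    (hsort : ∀ i j, i < j → j < t.length → t.drop (sa i) < t.drop (sa j))
    {p i : ℕ} (hp : p < t.length) (hi : i < t.length) :
    t.drop (sa p) < t.drop (sa i) ↔ p < i := by
  constructor
  · intro h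
    by_contra hpi
    push_neg at hpi
    rcases lt_or_eq_of_le hpi with h' | h'
    · exact lt_asymm (hsort i p h' hp) h
    · rw [h'] at h; exact lt_irrefl _ h
  · intro h; exact hsort p i h hi

private lemma card_filter_lt {t : List α} {sa : ℕ → ℕ}
    (hsort : ∀ i j, i < j → j < t.length → t.drop (sa i) < t.drop (sa j))
    {i : ℕ} (hi : i < t.length) :
    ((Finset.range t.length).filter (fun p => t.drop (sa p) < t.drop (sa i))).card = i := by
  have hset : (Finset.range t.length).filter (fun p => t.drop (sa p) < t.drop (sa i))
      = Finset.range i := by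
    ext p
    simp only [Finset.mem_filter, Finset.mem_range]
    constructor
    · rintro ⟨h1, h2⟩
      exact (suffix_lt_iff_lt hsort h1 hi).mp h2
    · intro h
      exact ⟨h.trans hi, (suffix_lt_iff_lt hsort (h.trans hi) hi).mpr h⟩
  rw [hset, Finset.card_range]

private lemma drop_ne_drop {t0 t1 : List α} (hend : DistinctEndMarkers t0 t1)
    {s0 s1 : ℕ} (h0 : s0 < t0.length) (h1 : s1 < t1.length) :
    t0.drop s0 ≠ t1.drop s1 := by
  obtain ⟨hne0, hne1, hlt, -⟩ := hend
  intro heq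
  have hL0 : t0.drop s0 ≠ [] := by
    rw [← List.length_pos_iff, List.length_drop]; omega
  have hL1 : t1.drop s1 ≠ [] := by
    rw [← List.length_pos_iff, List.length_drop]; omega
  have e0 : (t0.drop s0).getLast? = some (t0.getLast hne0) := by
    rw [List.getLast?_eq_getLast hL0, List.getLast_drop]
  have e1 : (t1.drop s1).getLast? = some (t1.getLast hne1) := by
    rw [List.getLast?_eq_getLast hL1, List.getLast_drop]
  rw [heq, e1] at e0
  exact absurd (Option.some.inj e0).symm (ne_of_lt hlt)

end SuffixAux

/-- interleaving `bwt(t0)` and `bwt(t1)` according to the merge vector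
`Z` (whose `i`-th zero precedes its `j`-th one iff `t0[sa0(i)..] ⪯ t1[sa1(j)..]`)
yields the multi-string BWT of `t0` and `t1`: for every `k`, the `k`-th symbol of the
interleaving is the symbol preceding (cyclically within its own string) the `k`-th
lexicographically smallest suffix among all the suffixes of `t0` and `t1`, the rank
of a suffix being the number of suffixes of `t0` and `t1` strictly smaller than it. -/
theorem merged_bwt_is_multistring_bwt {α : Type*} [LinearOrder α] [Inhabited α]
    (t0 t1 : List α) (hend : DistinctEndMarkers t0 t1)
    (sa0 : ℕ → ℕ) (hbij0 : Set.BijOn sa0 (Set.Iio t0.length) (Set.Iio t0.length))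
    (hsort0 : ∀ i j, i < j → j < t0.length → t0.drop (sa0 i) < t0.drop (sa0 j))
    (sa1 : ℕ → ℕ) (hbij1 : Set.BijOn sa1 (Set.Iio t1.length) (Set.Iio t1.length))
    (hsort1 : ∀ i j, i < j → j < t1.length → t1.drop (sa1 i) < t1.drop (sa1 j))
    (Z : List Bool) (hc0 : Z.count false = t0.length) (hc1 : Z.count true = t1.length)
    (hZ : ∀ i < t0.length, ∀ j < t1.length,
      (nthPos Z false i < nthPos Z true j ↔ t0.drop (sa0 i) ≤ t1.drop (sa1 j))) :
    ∀ k < t0.length + t1.length,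
      (∃ i < t0.length,
        ((Finset.range t0.length).filter
            (fun p => t0.drop (sa0 p) < t0.drop (sa0 i))).card
          + ((Finset.range t1.length).filter
            (fun q => t1.drop (sa1 q) < t0.drop (sa0 i))).card = k ∧
        mergeBy Z (prevSym t0 sa0) (prevSym t1 sa1) k = prevSym t0 sa0 i) ∨
      (∃ j < t1.length,
        ((Finset.range t0.length).filter
            (fun p => t0.drop (sa0 p) < t1.drop (sa1 j))).card
          + ((Finset.range t1.length).filter
            (fun q => t1.drop (sa1 q) < t1.drop (sa1 j))).card = k ∧
        mergeBy Z (prevSym t0 sa0) (prevSym t1 sa1) k = prevSym t1 sa1 j) := by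
  intro k hk
  have hlen : Z.length = t0.length + t1.length := by
    rw [← hc0, ← hc1, count_false_add_count_true]
  have hkZ : k < Z.length := by omega
  have hktc := take_counts (Z := Z) (le_of_lt hkZ)
  cases hbv : Z.getD k false with
  | false =>
    left
    set i := (Z.take k).count false with hi_def
    have hi : i < t0.length := by rw [← hc0]; exact take_count_lt hkZ hbv
    have hkpos : nthPos Z false i = k := nthPos_take_count hkZ hbv
    refine ⟨i, hi, ?_, ?_⟩
    · have c1 : ((Finset.range t0.length).filter
          (fun p => t0.drop (sa0 p) < t0.drop (sa0 i))).card = i :=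
        card_filter_lt hsort0 hi
      have c2 : ((Finset.range t1.length).filter
          (fun q => t1.drop (sa1 q) < t0.drop (sa0 i))).card = (Z.take k).count true := by
        have hset : (Finset.range t1.length).filter
            (fun q => t1.drop (sa1 q) < t0.drop (sa0 i))
            = Finset.range ((Z.take k).count true) := by
          ext q
          simp only [Finset.mem_filter, Finset.mem_range]
          constructor
          · rintro ⟨hq, hlt'⟩
            have hq' : q < Z.count true := by rw [hc1]; exact hq
            have h1 : ¬ t0.drop (sa0 i) ≤ t1.drop (sa1 q) := not_le.mpr hlt'
            have h2 : ¬ nthPos Z false i < nthPos Z true q :=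
              fun h => h1 ((hZ i hi q hq).mp h)
            rw [hkpos] at h2
            have h3 : nthPos Z true q ≠ k := by
              intro he
              have hmm := (nthPos_mem hq').2
              rw [he, hbv] at hmm
              exact Bool.noConfusion hmm
            have h4 : nthPos Z true q < k := by omega
            exact (nthPos_lt_iff hq' k).mp h4
          · intro hq'
            have hqc : q < Z.count true := lt_of_lt_of_le hq' (count_take_le Z true k)
            have hq : q < t1.length := by rw [← hc1]; exact hqc
            have h4 : nthPos Z true q < k := (nthPos_lt_iff hqc k).mpr hq'
            refine ⟨hq, ?_⟩
            have h5 : ¬ t0.drop (sa0 i) ≤ t1.drop (sa1 q) := by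
              intro hle
              have h6 := (hZ i hi q hq).mpr hle
              rw [hkpos] at h6
              omega
            exact not_le.mp h5
        rw [hset, Finset.card_range]
      rw [c1, c2]
      omega
    · simp only [mergeBy, hbv]
      rfl
  | true =>
    right
    set j := (Z.take k).count true with hj_def
    have hj : j < t1.length := by rw [← hc1]; exact take_count_lt hkZ hbv
    have hkpos : nthPos Z true j = k := nthPos_take_count hkZ hbv
    refine ⟨j, hj, ?_, ?_⟩
    · have c2 : ((Finset.range t1.length).filter
          (fun q => t1.drop (sa1 q) < t1.drop (sa1 j))).card = j :=
        card_filter_lt hsort1 hj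
      have c1 : ((Finset.range t0.length).filter
          (fun p => t0.drop (sa0 p) < t1.drop (sa1 j))).card = (Z.take k).count false := by
        have hset : (Finset.range t0.length).filter
            (fun p => t0.drop (sa0 p) < t1.drop (sa1 j))
            = Finset.range ((Z.take k).count false) := by
          ext p
          simp only [Finset.mem_filter, Finset.mem_range]
          constructor
          · rintro ⟨hp, hlt'⟩
            have hp' : p < Z.count false := by rw [hc0]; exact hp
            have h6 := (hZ p hp j hj).mpr (le_of_lt hlt')
            rw [hkpos] at h6
            exact (nthPos_lt_iff hp' k).mp h6
          · intro hp'
            have hpc : p < Z.count false := lt_of_lt_of_le hp' (count_take_le Z false k)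
            have hp : p < t0.length := by rw [← hc0]; exact hpc
            have h4 : nthPos Z false p < k := (nthPos_lt_iff hpc k).mpr hp'
            refine ⟨hp, ?_⟩
            rw [← hkpos] at h4
            have hle : t0.drop (sa0 p) ≤ t1.drop (sa1 j) := (hZ p hp j hj).mp h4
            have hne : t0.drop (sa0 p) ≠ t1.drop (sa1 j) :=
              drop_ne_drop hend (hbij0.mapsTo hp) (hbij1.mapsTo hj)
            exact lt_of_le_of_ne hle hne
        rw [hset, Finset.card_range]
      rw [c1, c2]
      omega
    · simp only [mergeBy, hbv]
      rfl
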